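/- Let S = {a₁,a₂} × {b₁,b₂} be the 2×2 rectangular band and F a field. The augmentation ideal F[ω_S] = {Σ α_{ij}(a_i,b_j) : Σ α_{ij} = 0} is the unique maximal two-sided ideal of F[S]; that is, every proper ideal of F[S] is contained in F[ω_S]. -/

import Mathlib

inductive L2 : Type | a1 | a2
deriving DecidableEq

instance : Fintype L2 := ⟨{L2.a1, L2.a2}, fun x => by cases x <;> simp⟩

instance : Semigroup L2 where
  mul x _ := x
  mul_assoc _ _ _ := rfl

inductive R2 : Type | b1 | b2
deriving DecidableEq

instance : Fintype R2 := ⟨{R2.b1, R2.b2}, fun x => by cases x <;> simp⟩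

instance : Semigroup R2 where
  mul _ y := y
  mul_assoc _ _ _ := rfl

abbrev RB : Type := L2 × R2

def IsTwoSidedIdeal {F A : Type*} [Field F] [NonUnitalNonAssocSemiring A]
    [Module F A] (J : Submodule F A) : Prop :=
  ∀ a x : A, x ∈ J → a * x ∈ J ∧ x * a ∈ J

variable (F : Type*) [Field F]

/-- The sum-of-coefficients (augmentation) linear map on `F[S]`. -/
noncomputable def coeffSum : MonoidAlgebra F RB →ₗ[F] F where
  toFun x := ∑ s : RB, x.coeff s
  map_add' x y := by
    simp only [show ∀ s, (x + y).coeff s = x.coeff s + y.coeff s from fun _ => rfl, Finset.sum_add_distrib]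
  map_smul' c x := by
    simp only [show ∀ s, (c • x).coeff s = c * x.coeff s from fun _ => rfl, Finset.mul_sum,
      RingHom.id_apply, smul_eq_mul]

/-- `J_L`: the kernel of the map `F[S] → F[L]` induced by the projection. -/
noncomputable def JL : Submodule F (MonoidAlgebra F RB) :=
  LinearMap.ker (Finsupp.lmapDomain F F (Prod.fst : RB → L2) ∘ₗ
    (MonoidAlgebra.coeffLinearEquiv F).toLinearMap)

/-- `J_R`: the kernel of the map `F[S] → F[R]` induced by the projection. -/
noncomputable def JR : Submodule F (MonoidAlgebra F RB) :=
  LinearMap.ker (Finsupp.lmapDomain F F (Prod.snd : RB → R2) ∘ₗ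
    (MonoidAlgebra.coeffLinearEquiv F).toLinearMap)

/-- The element `C = (a₁,b₁) − (a₁,b₂) − (a₂,b₁) + (a₂,b₂)`. -/
noncomputable def Celt : MonoidAlgebra F RB :=
  MonoidAlgebra.single (L2.a1, R2.b1) 1 - MonoidAlgebra.single (L2.a1, R2.b2) 1
    - MonoidAlgebra.single (L2.a2, R2.b1) 1 + MonoidAlgebra.single (L2.a2, R2.b2) 1

lemma coeffSum_single (s : RB) (r : F) :
    coeffSum F (MonoidAlgebra.single s r) = r := by
  simp [coeffSum, MonoidAlgebra.coeff_single, Finsupp.single_apply]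

lemma coeffSum_mul (x y : MonoidAlgebra F RB) :
    coeffSum F (x * y) = coeffSum F x * coeffSum F y := by
  induction x using MonoidAlgebra.induction_linear with
  | zero => simp
  | add f g hf hg => rw [add_mul, map_add, hf, hg, map_add, add_mul]
  | single s r =>
    induction y using MonoidAlgebra.induction_linear with
    | zero => simp
    | add f g hf hg => rw [mul_add, map_add, hf, hg, map_add, mul_add]
    | single t q =>
      rw [MonoidAlgebra.single_mul_single, coeffSum_single, coeffSum_single, coeffSum_single]

lemma sandwich (a c : L2) (b d : R2) (x : MonoidAlgebra F RB) :
    MonoidAlgebra.single (a, b) (1 : F) * x * MonoidAlgebra.single (c, d) (1 : F)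
      = coeffSum F x • MonoidAlgebra.single (a, d) (1 : F) := by
  induction x using MonoidAlgebra.induction_linear with
  | zero => simp
  | add f g hf hg => rw [mul_add, add_mul, hf, hg, map_add, add_smul]
  | single s r =>
    rw [MonoidAlgebra.single_mul_single, MonoidAlgebra.single_mul_single, coeffSum_single,
      MonoidAlgebra.smul_single]
    rcases s with ⟨u, v⟩
    show MonoidAlgebra.single ((a, b) * (u, v) * (c, d)) _ = _
    simp only [Prod.mk_mul_mk]
    norm_num [show ∀ x y : L2, x * y = x from fun _ _ => rfl,
      show ∀ x y : R2, x * y = y from fun _ _ => rfl]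

/-- The augmentation ideal (kernel of the coefficient-sum map) is the unique
maximal two-sided ideal of the semigroup algebra of the 2x2 rectangular band:
it is a proper two-sided ideal containing every proper two-sided ideal. -/
theorem augmentation_unique_maximal_ideal :
    IsTwoSidedIdeal (LinearMap.ker (coeffSum F)) ∧
    LinearMap.ker (coeffSum F) ≠ ⊤ ∧
    ∀ J : Submodule F (MonoidAlgebra F RB),
      IsTwoSidedIdeal J → J ≠ ⊤ → J ≤ LinearMap.ker (coeffSum F) := by
  refine ⟨?_, ?_, ?_⟩
  · intro a x hx
    rw [LinearMap.mem_ker] at hx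
    constructor <;> rw [LinearMap.mem_ker, coeffSum_mul, hx] <;> ring
  · intro h
    have h1 : MonoidAlgebra.single ((L2.a1, R2.b1) : RB) (1 : F) ∈
        LinearMap.ker (coeffSum F) := h ▸ Submodule.mem_top
    rw [LinearMap.mem_ker, coeffSum_single] at h1
    exact one_ne_zero h1
  · intro J hJ hJtop x hx
    by_contra hcx
    rw [LinearMap.mem_ker] at hcx
    apply hJtop
    -- all standard basis elements are in J
    have hsingle : ∀ a : L2, ∀ d : R2,
        MonoidAlgebra.single ((a, d) : RB) (1 : F) ∈ J := by
      intro a d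
      have h1 : MonoidAlgebra.single ((a, R2.b1) : RB) (1 : F) * x ∈ J :=
        (hJ _ _ hx).1
      have h2 : MonoidAlgebra.single ((a, R2.b1) : RB) (1 : F) * x *
          MonoidAlgebra.single ((a, d) : RB) (1 : F) ∈ J :=
        (hJ (MonoidAlgebra.single ((a, d) : RB) (1 : F)) _ h1).2
      rw [sandwich] at h2
      have h3 := J.smul_mem (coeffSum F x)⁻¹ h2
      rwa [smul_smul, inv_mul_cancel₀ hcx, one_smul] at h3
    rw [Submodule.eq_top_iff']
    intro y
    induction y using MonoidAlgebra.induction_linear with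
    | zero => exact J.zero_mem
    | add f g hf hg => exact J.add_mem hf hg
    | single s r =>
      have := J.smul_mem r (hsingle s.1 s.2)
      rwa [MonoidAlgebra.smul_single, smul_eq_mul, mul_one] at this
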